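/- Let G be a compact abelian topological group with Haar probability measure μ_G, let d ≥ 1, and let π : G → (ℝ/ℤ)^d be a continuous group homomorphism. For θ ∈ (ℝ/ℤ)^d write |θ| := max_i ‖θ_i‖_{ℝ/ℤ}, where ‖·‖_{ℝ/ℤ} is the distance to the nearest integer. Then for every δ ∈ (0,1], μ_G({x ∈ G : |π(x)| ≤ δ}) ≥ δ^d. -/

import Mathlib

open MeasureTheory

theorem stmt6 {G : Type*} [AddCommGroup G] [TopologicalSpace G] [IsTopologicalAddGroup G]
    [CompactSpace G] [MeasurableSpace G] [BorelSpace G]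
    (μ : Measure G) [IsProbabilityMeasure μ] [μ.IsAddHaarMeasure]
    (d : ℕ) (hd : 1 ≤ d)
    (π : G →+ (Fin d → AddCircle (1 : ℝ))) (hπ : Continuous π)
    (δ : ℝ) (hδ0 : 0 < δ) (hδ1 : δ ≤ 1) :
    ENNReal.ofReal (δ ^ d) ≤ μ {x : G | ∀ i, ‖π x i‖ ≤ δ} := by
  classical
  set T := Fin d → AddCircle (1 : ℝ) with hT
  set lam : Measure T := volume with hlam
  set c : ENNReal := ENNReal.ofReal (δ ^ d) with hc
  -- each coordinate ball has volume δ
  have hball : ∀ t : AddCircle (1 : ℝ), volume (Metric.closedBall t (δ / 2))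
      = ENNReal.ofReal δ := by
    intro t
    rw [AddCircle.volume_closedBall]
    congr 1
    rw [min_eq_right]
    · ring
    · linarith
  -- the ball in T has measure c
  have hQ : ∀ t : T, lam (Metric.closedBall t (δ / 2)) = c := by
    intro t
    rw [closedBall_pi _ (by linarith : (0:ℝ) ≤ δ / 2)]
    rw [hlam]
    rw [show (volume : Measure T) = Measure.pi (fun _ => volume) from rfl]
    rw [Measure.pi_pi]
    simp only [hball]
    rw [Finset.prod_const, ← ENNReal.ofReal_pow hδ0.le, Finset.card_univ, Fintype.card_fin, hc]
  -- the product set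
  set S : Set (T × G) := {p | dist (π p.2) p.1 ≤ δ / 2} with hS
  have hSmeas : MeasurableSet S := by
    have : Continuous fun p : T × G => dist (π p.2) p.1 :=
      (hπ.comp continuous_snd).dist continuous_fst
    exact (isClosed_le this continuous_const).measurableSet
  have hlamprob : IsProbabilityMeasure lam := by
    constructor
    rw [hlam, show (volume : Measure T) = Measure.pi (fun _ => volume) from rfl,
      ← Set.pi_univ Set.univ, Measure.pi_pi]
    simp [AddCircle.measure_univ]
  -- Fubini: (lam.prod μ) S = c
  have hfub : (lam.prod μ) S = c := by
    rw [Measure.prod_apply_symm hSmeas]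
    calc ∫⁻ x, lam ((fun t => (t, x)) ⁻¹' S) ∂μ = ∫⁻ _, c ∂μ := by
          apply lintegral_congr
          intro x
          have hset : ((fun t => (t, x)) ⁻¹' S) = Metric.closedBall (π x) (δ / 2) := by
            ext t
            simp [hS, Metric.mem_closedBall, dist_comm]
          rw [hset, hQ]
      _ = c := by simp
  -- find t such that the fiber has measure ≥ c
  have hex : ∃ t : T, c ≤ μ {x : G | dist (π x) t ≤ δ / 2} := by
    by_contra h
    push_neg at h
    have hfmeas : Measurable fun t : T => μ (Prod.mk t ⁻¹' S) :=
      measurable_measure_prodMk_left hSmeas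
    have hfib : ∀ t : T, (Prod.mk t ⁻¹' S) = {x : G | dist (π x) t ≤ δ / 2} := by
      intro t; ext x; simp [hS]
    have hint : ∫⁻ t, μ (Prod.mk t ⁻¹' S) ∂lam = c := by
      rw [← Measure.prod_apply hSmeas, hfub]
    have hlt : ∫⁻ t, μ (Prod.mk t ⁻¹' S) ∂lam < ∫⁻ _, c ∂lam := by
      apply lintegral_strict_mono
      · exact (IsProbabilityMeasure.ne_zero lam)
      · exact measurable_const.aemeasurable
      · rw [hint]; exact (ENNReal.ofReal_lt_top).ne
      · filter_upwards with t
        rw [hfib t]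
        exact h t
    rw [hint, lintegral_const, measure_univ, mul_one] at hlt
    exact lt_irrefl _ hlt
  obtain ⟨t, ht⟩ := hex
  set A : Set G := {x : G | dist (π x) t ≤ δ / 2} with hA
  have hcpos : (0:ENNReal) < c := ENNReal.ofReal_pos.mpr (pow_pos hδ0 d)
  have hApos : μ A ≠ 0 := fun h0 => (hcpos.trans_le (h0 ▸ ht)).ne' rfl
  obtain ⟨x0, hx0⟩ := nonempty_of_measure_ne_zero hApos
  set E : Set G := {x : G | ∀ i, ‖π x i‖ ≤ δ} with hE
  have hsub : A ⊆ (fun h => -x0 + h) ⁻¹' E := by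
    intro x hx
    intro i
    have h1 : dist (π x i) (t i) ≤ δ / 2 := (dist_le_pi_dist (π x) t i).trans hx
    have h2 : dist (π x0 i) (t i) ≤ δ / 2 := (dist_le_pi_dist (π x0) t i).trans hx0
    have : π (-x0 + x) i = π x i - π x0 i := by
      rw [map_add, map_neg]
      simp [sub_eq_neg_add]
    rw [this, ← dist_eq_norm]
    calc dist (π x i) (π x0 i) ≤ dist (π x i) (t i) + dist (π x0 i) (t i) :=
          dist_triangle_right _ _ _
      _ ≤ δ / 2 + δ / 2 := add_le_add h1 h2
      _ = δ := by ring
  calc c ≤ μ A := ht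
    _ ≤ μ ((fun h => -x0 + h) ⁻¹' E) := measure_mono hsub
    _ = μ E := measure_preimage_add μ (-x0) E
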